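/- (Theorem 4.4, data-driven ASF, pointwise form.) Let n, m, M, T be positive integers. Let A ∈ ℝ^{n×M}, B ∈ ℝ^{n×m}, 𝓜 : ℝⁿ → ℝ^M. Let Ξ ∈ ℝ^{n×n} be symmetric positive definite and set P = Ξ⁻¹. Let Θ ∈ ℝ^{n×n}, μ > 0, γ ∈ (0,1), δ > 0, and let Π : ℝⁿ → ℝⁿ satisfy ‖Π(y) − y‖ ≤ δ for all y ∈ ℝⁿ (Euclidean norm). Fix x, x̂ ∈ ℝⁿ, û ∈ ℝᵐ, and suppose: (a) there exist Υ₁, Υ₂ ∈ ℝ^{M×n} with 𝓜(x) = Υ₁·x and 𝓜(x̂) = Υ₂·x̂; (b) data matrices 𝕄, 𝕄̂ ∈ ℝ^{M×T}, 𝓘, 𝓘̂ ∈ ℝ^{m×T}, O⁺, Ô⁺ ∈ ℝ^{n×T} satisfy O⁺ = A𝕄 + B𝓘 and Ô⁺ = A𝕄̂ + B𝓘̂; (c) there exist Y₁, Y₂ ∈ ℝ^{T×n} with 𝕄·Y₁ = Υ₁·Ξ, 𝕄̂·Y₂ = Υ₂·Ξ, O⁺·Y₁ = Θ, and Ô⁺·Y₂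 = Θ; (d) the symmetric block matrix [[(1/(1+μ))·Ξ, Θ],[Θᵀ, γ·Ξ]] ∈ ℝ^{2n×2n} is positive semidefinite. Define u = 𝓘·(Y₁·(P·x)) − 𝓘̂·(Y₂·(P·x̂)) + û and S(a,b) = (a − b)ᵀ·P·(a − b). Then S( A·𝓜(x) + B·u , Π(A·𝓜(x̂) + B·û) ) ≤ γ·S(x, x̂) + (1 + 1/μ)·‖P^{1/2}‖²·δ², where P^{1/2} is the positive semidefinite square root of P and ‖·‖ is the induced 2-norm (ℓ²-operator norm) of a matrix. -/

import Mathlib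

open Matrix
open scoped Matrix.Norms.L2Operator

namespace Matrix.PosSemidef

open scoped ComplexOrder

/-- The positive semidefinite square root of a positive semidefinite matrix
(the definition `Matrix.PosSemidef.sqrt` of the older Mathlib). -/
noncomputable def sqrt {n 𝕜 : Type*} [Fintype n] [RCLike 𝕜] [DecidableEq n]
    {A : Matrix n n 𝕜} (hA : A.PosSemidef) : Matrix n n 𝕜 :=
  hA.1.eigenvectorUnitary.1 * diagonal ((↑) ∘ (√·) ∘ hA.1.eigenvalues) *
    (star hA.1.eigenvectorUnitary : Matrix n n 𝕜)

end Matrix.PosSemidef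

lemma psd_sqrt_transpose' {k : ℕ} {A : Matrix (Fin k) (Fin k) ℝ} (hA : A.PosSemidef) :
    (hA.sqrt)ᵀ = hA.sqrt := by
  simp [Matrix.PosSemidef.sqrt, Matrix.transpose_mul, Matrix.star_eq_conjTranspose,
    Matrix.conjTranspose_eq_transpose_of_trivial, Matrix.mul_assoc]

lemma psd_sqrt_mul_self' {k : ℕ} {A : Matrix (Fin k) (Fin k) ℝ} (hA : A.PosSemidef) :
    hA.sqrt * hA.sqrt = A := by
  have hU := hA.1.eigenvectorUnitary.2
  have hs : (star hA.1.eigenvectorUnitary : Matrix (Fin k) (Fin k) ℝ) * hA.1.eigenvectorUnitary.1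
      = 1 := Unitary.star_mul_self_of_mem hU
  unfold Matrix.PosSemidef.sqrt
  conv_rhs => rw [hA.1.spectral_theorem, Unitary.conjStarAlgAut_apply]
  have e : ∀ (X D Z W E V : Matrix (Fin k) (Fin k) ℝ),
      X * D * Z * (W * E * V) = X * (D * (Z * W) * E) * V := by
    intros; simp only [Matrix.mul_assoc]
  rw [e, hs, Matrix.mul_one, Matrix.diagonal_mul_diagonal]
  congr 2
  exact congrArg _ (funext fun i => by simp [Real.mul_self_sqrt (hA.eigenvalues_nonneg i)])

lemma dot_symm' {n : ℕ} (Q : Matrix (Fin n) (Fin n) ℝ) (hQ : Qᵀ = Q)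
    (v w : Fin n → ℝ) : v ⬝ᵥ Q *ᵥ w = w ⬝ᵥ Q *ᵥ v := by
  calc v ⬝ᵥ Q *ᵥ w = (v ᵥ* Q) ⬝ᵥ w := Matrix.dotProduct_mulVec v Q w
    _ = (Qᵀ *ᵥ v) ⬝ᵥ w := by rw [Matrix.mulVec_transpose]
    _ = (Q *ᵥ v) ⬝ᵥ w := by rw [hQ]
    _ = w ⬝ᵥ Q *ᵥ v := dotProduct_comm _ _

lemma dot_self_eq_norm_sq' {n : ℕ} (v : EuclideanSpace ℝ (Fin n)) :
    (v : Fin n → ℝ) ⬝ᵥ (v : Fin n → ℝ) = ‖v‖ ^ 2 := by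
  rw [EuclideanSpace.norm_eq, Real.sq_sqrt (by positivity)]
  simp [dotProduct, pow_two, Real.norm_eq_abs, abs_mul_abs_self]

lemma dot_P_le' {n : ℕ} (P R : Matrix (Fin n) (Fin n) ℝ) (hRsymm : Rᵀ = R)
    (hRR : R * R = P) (q : EuclideanSpace ℝ (Fin n)) :
    (q : Fin n → ℝ) ⬝ᵥ P *ᵥ (q : Fin n → ℝ) ≤ ‖R‖ ^ 2 * ‖q‖ ^ 2 := by
  have h1 : (q : Fin n → ℝ) ⬝ᵥ P *ᵥ (q : Fin n → ℝ) = (R *ᵥ q) ⬝ᵥ (R *ᵥ q) := by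
    rw [← hRR, ← Matrix.mulVec_mulVec, Matrix.dotProduct_mulVec, ← Matrix.mulVec_transpose,
      hRsymm]
  have h2 : (R *ᵥ (q : Fin n → ℝ)) ⬝ᵥ (R *ᵥ (q : Fin n → ℝ))
      = ‖(EuclideanSpace.equiv (Fin n) ℝ).symm (R *ᵥ (q : Fin n → ℝ))‖ ^ 2 :=
    dot_self_eq_norm_sq' ((EuclideanSpace.equiv (Fin n) ℝ).symm (R *ᵥ (q : Fin n → ℝ)))
  have h3 : ‖(EuclideanSpace.equiv (Fin n) ℝ).symm (R *ᵥ (q : Fin n → ℝ))‖ ≤ ‖R‖ * ‖q‖ :=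
    R.l2_opNorm_mulVec q
  have h4 : ‖(EuclideanSpace.equiv (Fin n) ℝ).symm (R *ᵥ (q : Fin n → ℝ))‖ ^ 2
      ≤ (‖R‖ * ‖q‖) ^ 2 :=
    pow_le_pow_left₀ (norm_nonneg _) h3 2
  rw [h1, h2]
  calc _ ≤ (‖R‖ * ‖q‖) ^ 2 := h4
    _ = ‖R‖ ^ 2 * ‖q‖ ^ 2 := by ring

lemma lmi_young' {n : ℕ} (Ξ P Θ : Matrix (Fin n) (Fin n) ℝ)
    (hP : P.PosSemidef) (hPsymm : Pᵀ = P) (hΞP : Ξ * P = 1)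
    (μ γ : ℝ) (hμ : 0 < μ)
    (hLMI : (Matrix.fromBlocks ((1 / (1 + μ)) • Ξ) Θ Θᵀ (γ • Ξ)).PosSemidef)
    (e q d : Fin n → ℝ) (hd : d = Θ *ᵥ (P *ᵥ e) - q) :
    d ⬝ᵥ P *ᵥ d ≤ γ * (e ⬝ᵥ P *ᵥ e) + (1 + 1 / μ) * (q ⬝ᵥ P *ᵥ q) := by
  have hμ1 : (0:ℝ) < 1 + μ := by linarith
  subst hd
  set f : Fin n → ℝ := P *ᵥ e with hf
  set g : Fin n → ℝ := Θ *ᵥ f with hg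
  have hL : (1 + μ) * (g ⬝ᵥ P *ᵥ g) ≤ γ * (e ⬝ᵥ f) := by
    set h : Fin n → ℝ := P *ᵥ g with hh
    have hΞh : Ξ *ᵥ h = g := by
      rw [hh, Matrix.mulVec_mulVec, hΞP, Matrix.one_mulVec]
    set a : Fin n → ℝ := -((1 + μ) • h) with ha
    have h2 := hLMI.dotProduct_mulVec_nonneg (Sum.elim a f)
    rw [star_trivial, Matrix.fromBlocks_mulVec, sumElim_dotProduct_sumElim] at h2
    simp only [Sum.elim_comp_inl, Sum.elim_comp_inr] at h2
    have e1 : ((1 / (1 + μ)) • Ξ) *ᵥ a + Θ *ᵥ f = 0 := by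
      rw [ha, Matrix.smul_mulVec, Matrix.mulVec_neg, Matrix.mulVec_smul, hΞh, ← hg]
      rw [smul_neg, smul_smul, one_div, inv_mul_cancel₀ hμ1.ne', one_smul]
      exact neg_add_cancel g
    rw [e1, dotProduct_zero, dotProduct_add] at h2
    have e2 : f ⬝ᵥ Θᵀ *ᵥ a = -((1 + μ) * (g ⬝ᵥ h)) := by
      rw [Matrix.dotProduct_mulVec, Matrix.vecMul_transpose, ← hg, ha,
        dotProduct_neg, dotProduct_smul, smul_eq_mul]
    have e3 : f ⬝ᵥ (γ • Ξ) *ᵥ f = γ * (f ⬝ᵥ Ξ *ᵥ f) := by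
      rw [Matrix.smul_mulVec, dotProduct_smul, smul_eq_mul]
    rw [e2, e3] at h2
    have e4 : f ⬝ᵥ Ξ *ᵥ f = e ⬝ᵥ f := by
      conv_lhs => rw [hf, Matrix.mulVec_mulVec e Ξ P, hΞP, Matrix.one_mulVec]
      exact dotProduct_comm _ _
    rw [e4] at h2
    linarith
  have hpos := hP.dotProduct_mulVec_nonneg (μ • g + q)
  rw [star_trivial] at hpos
  have hswap : q ⬝ᵥ P *ᵥ g = g ⬝ᵥ P *ᵥ q := dot_symm' P hPsymm q g
  have expand1 : (μ • g + q) ⬝ᵥ P *ᵥ (μ • g + q)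
      = μ ^ 2 * (g ⬝ᵥ P *ᵥ g) + 2 * μ * (g ⬝ᵥ P *ᵥ q) + q ⬝ᵥ P *ᵥ q := by
    rw [Matrix.mulVec_add, Matrix.mulVec_smul, add_dotProduct, smul_dotProduct,
      dotProduct_add, dotProduct_add, dotProduct_smul,
      dotProduct_smul, hswap, smul_eq_mul, smul_eq_mul, smul_eq_mul]
    ring
  have expand2 : (g - q) ⬝ᵥ P *ᵥ (g - q)
      = g ⬝ᵥ P *ᵥ g - 2 * (g ⬝ᵥ P *ᵥ q) + q ⬝ᵥ P *ᵥ q := by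
    rw [Matrix.mulVec_sub, sub_dotProduct, dotProduct_sub, dotProduct_sub,
      hswap]
    ring
  rw [expand1] at hpos
  rw [expand2]
  have h5 : 0 ≤ μ * (g ⬝ᵥ P *ᵥ g) + 2 * (g ⬝ᵥ P *ᵥ q) + (1 / μ) * (q ⬝ᵥ P *ᵥ q) := by
    have h6 := div_nonneg hpos hμ.le
    have h7 : (μ ^ 2 * (g ⬝ᵥ P *ᵥ g) + 2 * μ * (g ⬝ᵥ P *ᵥ q) + q ⬝ᵥ P *ᵥ q) / μ
        = μ * (g ⬝ᵥ P *ᵥ g) + 2 * (g ⬝ᵥ P *ᵥ q) + (1 / μ) * (q ⬝ᵥ P *ᵥ q) := by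
      field_simp
    rwa [h7] at h6
  linarith


/-- Theorem 4.4 (data-driven ASF, pointwise form): under the data-based conditions
(9a)-(9d) and the LMI (9e), the quadratic candidate `S(a,b) = (a−b)ᵀP(a−b)` with `P = Ξ⁻¹`
and the hybrid interface input `u = 𝓘Y₁Px − 𝓘̂Y₂Px̂ + û` satisfy
`S(A𝓜(x)+Bu, Π(A𝓜(x̂)+Bû)) ≤ γ·S(x,x̂) + (1 + 1/μ)‖P^{1/2}‖²δ²`. -/
theorem data_driven_asf_pointwise
    (n m M T : ℕ) (hn : 0 < n) (hm : 0 < m) (hM : 0 < M) (hT : 0 < T)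
    (A : Matrix (Fin n) (Fin M) ℝ) (B : Matrix (Fin n) (Fin m) ℝ)
    (𝓜 : EuclideanSpace ℝ (Fin n) → EuclideanSpace ℝ (Fin M))
    (Ξ : Matrix (Fin n) (Fin n) ℝ) (hΞ : Ξ.PosDef)
    (Θ : Matrix (Fin n) (Fin n) ℝ)
    (μ γ δ : ℝ) (hμ : 0 < μ) (hγ : γ ∈ Set.Ioo (0 : ℝ) 1) (hδ : 0 < δ)
    (Piq : EuclideanSpace ℝ (Fin n) → EuclideanSpace ℝ (Fin n))
    (hPiq : ∀ y : EuclideanSpace ℝ (Fin n), ‖Piq y - y‖ ≤ δ)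
    (x xh : EuclideanSpace ℝ (Fin n)) (uh : Fin m → ℝ)
    (Υ₁ Υ₂ : Matrix (Fin M) (Fin n) ℝ)
    (hΥ₁ : 𝓜 x = Υ₁.mulVec x) (hΥ₂ : 𝓜 xh = Υ₂.mulVec xh)
    (𝕄 𝕄h : Matrix (Fin M) (Fin T) ℝ)
    (𝓘 𝓘h : Matrix (Fin m) (Fin T) ℝ)
    (Op Ohp : Matrix (Fin n) (Fin T) ℝ)
    (hOp : Op = A * 𝕄 + B * 𝓘) (hOhp : Ohp = A * 𝕄h + B * 𝓘h)
    (Y₁ Y₂ : Matrix (Fin T) (Fin n) ℝ)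
    (hY₁ : 𝕄 * Y₁ = Υ₁ * Ξ) (hY₂ : 𝕄h * Y₂ = Υ₂ * Ξ)
    (hΘ₁ : Op * Y₁ = Θ) (hΘ₂ : Ohp * Y₂ = Θ)
    (hLMI : (Matrix.fromBlocks ((1 / (1 + μ)) • Ξ) Θ Θᵀ (γ • Ξ)).PosSemidef)
    (u : Fin m → ℝ)
    (hu : u = 𝓘.mulVec (Y₁.mulVec (Ξ⁻¹.mulVec x)) - 𝓘h.mulVec (Y₂.mulVec (Ξ⁻¹.mulVec xh)) + uh)
    (S : EuclideanSpace ℝ (Fin n) → EuclideanSpace ℝ (Fin n) → ℝ)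
    (hS : ∀ a b : EuclideanSpace ℝ (Fin n), S a b = (a - b) ⬝ᵥ Ξ⁻¹.mulVec (a - b)) :
    S (WithLp.toLp 2 (A.mulVec (𝓜 x) + B.mulVec u)) (Piq (WithLp.toLp 2 (A.mulVec (𝓜 xh) + B.mulVec uh)))
      ≤ γ * S x xh + (1 + 1 / μ) * ‖hΞ.inv.posSemidef.sqrt‖ ^ 2 * δ ^ 2 := by
  obtain ⟨hγ0, hγ1⟩ := hγ
  have hμ' : (0:ℝ) < 1 + 1 / μ := by positivity
  have hP : (Ξ⁻¹).PosDef := hΞ.inv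
  have hPsymm : (Ξ⁻¹)ᵀ = Ξ⁻¹ := by
    have h := hP.posSemidef.isHermitian
    rwa [Matrix.IsHermitian, Matrix.conjTranspose_eq_transpose_of_trivial] at h
  have hΞP : Ξ * Ξ⁻¹ = 1 :=
    Matrix.mul_nonsing_inv Ξ (Matrix.isUnit_iff_isUnit_det Ξ |>.mp hΞ.isUnit)
  have hRsymm : (hΞ.inv.posSemidef.sqrt)ᵀ = hΞ.inv.posSemidef.sqrt := by
    exact psd_sqrt_transpose' hΞ.inv.posSemidef
  have hRR : hΞ.inv.posSemidef.sqrt * hΞ.inv.posSemidef.sqrt = Ξ⁻¹ :=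
    psd_sqrt_mul_self' hΞ.inv.posSemidef
  -- interface identities
  have key₁ : A *ᵥ (Υ₁ *ᵥ (x : Fin n → ℝ)) + B *ᵥ (𝓘 *ᵥ (Y₁ *ᵥ (Ξ⁻¹ *ᵥ x)))
      = Θ *ᵥ (Ξ⁻¹ *ᵥ x) := by
    have hmat : A * Υ₁ * Ξ + B * (𝓘 * Y₁) = Θ := by
      rw [← hΘ₁, hOp, Matrix.add_mul, Matrix.mul_assoc A 𝕄 Y₁, hY₁,
        Matrix.mul_assoc B 𝓘 Y₁, ← Matrix.mul_assoc A Υ₁ Ξ]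
    have hmat2 : A * Υ₁ + B * (𝓘 * Y₁) * Ξ⁻¹ = Θ * Ξ⁻¹ := by
      rw [← hmat, Matrix.add_mul, Matrix.mul_assoc (A * Υ₁) Ξ Ξ⁻¹, hΞP, Matrix.mul_one]
    calc A *ᵥ (Υ₁ *ᵥ (x : Fin n → ℝ)) + B *ᵥ (𝓘 *ᵥ (Y₁ *ᵥ (Ξ⁻¹ *ᵥ x)))
        = (A * Υ₁) *ᵥ (x : Fin n → ℝ) + (B * (𝓘 * Y₁) * Ξ⁻¹) *ᵥ x := by
          rw [Matrix.mulVec_mulVec, Matrix.mulVec_mulVec, Matrix.mulVec_mulVec,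
            Matrix.mulVec_mulVec, Matrix.mul_assoc B 𝓘 Y₁]
      _ = (A * Υ₁ + B * (𝓘 * Y₁) * Ξ⁻¹) *ᵥ (x : Fin n → ℝ) := (Matrix.add_mulVec _ _ _).symm
      _ = (Θ * Ξ⁻¹) *ᵥ (x : Fin n → ℝ) := by rw [hmat2]
      _ = Θ *ᵥ (Ξ⁻¹ *ᵥ x) := (Matrix.mulVec_mulVec _ Θ Ξ⁻¹).symm
  have key₂ : A *ᵥ (Υ₂ *ᵥ (xh : Fin n → ℝ)) + B *ᵥ (𝓘h *ᵥ (Y₂ *ᵥ (Ξ⁻¹ *ᵥ xh)))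
      = Θ *ᵥ (Ξ⁻¹ *ᵥ xh) := by
    have hmat : A * Υ₂ * Ξ + B * (𝓘h * Y₂) = Θ := by
      rw [← hΘ₂, hOhp, Matrix.add_mul, Matrix.mul_assoc A 𝕄h Y₂, hY₂,
        Matrix.mul_assoc B 𝓘h Y₂, ← Matrix.mul_assoc A Υ₂ Ξ]
    have hmat2 : A * Υ₂ + B * (𝓘h * Y₂) * Ξ⁻¹ = Θ * Ξ⁻¹ := by
      rw [← hmat, Matrix.add_mul, Matrix.mul_assoc (A * Υ₂) Ξ Ξ⁻¹, hΞP, Matrix.mul_one]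
    calc A *ᵥ (Υ₂ *ᵥ (xh : Fin n → ℝ)) + B *ᵥ (𝓘h *ᵥ (Y₂ *ᵥ (Ξ⁻¹ *ᵥ xh)))
        = (A * Υ₂) *ᵥ (xh : Fin n → ℝ) + (B * (𝓘h * Y₂) * Ξ⁻¹) *ᵥ xh := by
          rw [Matrix.mulVec_mulVec, Matrix.mulVec_mulVec, Matrix.mulVec_mulVec,
            Matrix.mulVec_mulVec, Matrix.mul_assoc B 𝓘h Y₂]
      _ = (A * Υ₂ + B * (𝓘h * Y₂) * Ξ⁻¹) *ᵥ (xh : Fin n → ℝ) := (Matrix.add_mulVec _ _ _).symm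
      _ = (Θ * Ξ⁻¹) *ᵥ (xh : Fin n → ℝ) := by rw [hmat2]
      _ = Θ *ᵥ (Ξ⁻¹ *ᵥ xh) := (Matrix.mulVec_mulVec _ Θ Ξ⁻¹).symm
  -- closed-loop vector identities (pi world)
  have hY : A *ᵥ (𝓜 x) + B *ᵥ u
      = Θ *ᵥ (Ξ⁻¹ *ᵥ (x : Fin n → ℝ)) - B *ᵥ (𝓘h *ᵥ (Y₂ *ᵥ (Ξ⁻¹ *ᵥ xh))) + B *ᵥ uh := by
    rw [hu, Matrix.mulVec_add, Matrix.mulVec_sub, hΥ₁, ← key₁]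
    abel
  have hYh : A *ᵥ (𝓜 xh) + B *ᵥ uh
      = Θ *ᵥ (Ξ⁻¹ *ᵥ (xh : Fin n → ℝ)) - B *ᵥ (𝓘h *ᵥ (Y₂ *ᵥ (Ξ⁻¹ *ᵥ xh))) + B *ᵥ uh := by
    rw [hΥ₂, ← key₂]
    abel
  -- pointwise-defined difference vectors (definitionally equal to the Euclidean ones)
  set yhE : EuclideanSpace ℝ (Fin n) := WithLp.toLp 2 (A.mulVec (𝓜 xh) + B.mulVec uh) with hyhE
  set e : Fin n → ℝ := fun i => x i - xh i with he
  set qv : Fin n → ℝ := fun i => Piq yhE i - yhE i with hqv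
  set dv : Fin n → ℝ := fun i => (A *ᵥ (𝓜 x) + B *ᵥ u) i - Piq yhE i with hdv
  obtain ⟨xv, hxv⟩ : ∃ v : Fin n → ℝ, v = x := ⟨x, rfl⟩
  obtain ⟨xhv, hxhv⟩ : ∃ v : Fin n → ℝ, v = xh := ⟨xh, rfl⟩
  obtain ⟨zv, hzv⟩ : ∃ v : Fin n → ℝ, v = Piq yhE := ⟨Piq yhE, rfl⟩
  obtain ⟨yhv, hyhv⟩ : ∃ v : Fin n → ℝ, v = yhE := ⟨yhE, rfl⟩
  have he2 : e = xv - xhv := by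
    funext i; simp [he, Pi.sub_apply, hxv, hxhv]
  have hqv2 : qv = zv - yhv := by
    funext i; simp [hqv, Pi.sub_apply, hzv, hyhv]
  have hdv2 : dv = (A *ᵥ (𝓜 x) + B *ᵥ u) - zv := by
    funext i; simp [hdv, Pi.sub_apply, hzv]
  have hyhv2 : yhv
      = Θ *ᵥ (Ξ⁻¹ *ᵥ (xh : Fin n → ℝ)) - B *ᵥ (𝓘h *ᵥ (Y₂ *ᵥ (Ξ⁻¹ *ᵥ xh))) + B *ᵥ uh := by
    rw [hyhv, hyhE]
    exact hYh
  have hPe : Ξ⁻¹ *ᵥ e = Ξ⁻¹ *ᵥ xv - Ξ⁻¹ *ᵥ xhv := by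
    rw [he2, Matrix.mulVec_sub]
  -- step A
  have stepA : dv = Θ *ᵥ (Ξ⁻¹ *ᵥ e) - qv := by
    rw [hdv2, hqv2, hPe, Matrix.mulVec_sub, hY, hyhv2, hxv, hxhv]
    abel
  -- the quadratic bound
  have main := lmi_young' Ξ (Ξ⁻¹) Θ hP.posSemidef hPsymm hΞP μ γ hμ hLMI e qv dv stepA
  -- bound on the disturbance term
  have hqb : qv ⬝ᵥ Ξ⁻¹ *ᵥ qv ≤ ‖hΞ.inv.posSemidef.sqrt‖ ^ 2 * δ ^ 2 := by
    have hb : qv ⬝ᵥ Ξ⁻¹ *ᵥ qv ≤ ‖hΞ.inv.posSemidef.sqrt‖ ^ 2 * ‖Piq yhE - yhE‖ ^ 2 :=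
      dot_P_le' (Ξ⁻¹) _ hRsymm hRR (Piq yhE - yhE)
    have hδ' : ‖Piq yhE - yhE‖ ^ 2 ≤ δ ^ 2 :=
      pow_le_pow_left₀ (norm_nonneg _) (hPiq yhE) 2
    calc qv ⬝ᵥ Ξ⁻¹ *ᵥ qv ≤ ‖hΞ.inv.posSemidef.sqrt‖ ^ 2 * ‖Piq yhE - yhE‖ ^ 2 := hb
      _ ≤ ‖hΞ.inv.posSemidef.sqrt‖ ^ 2 * δ ^ 2 :=
        mul_le_mul_of_nonneg_left hδ' (by positivity)
  have final : dv ⬝ᵥ Ξ⁻¹ *ᵥ dv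
      ≤ γ * (e ⬝ᵥ Ξ⁻¹ *ᵥ e) + (1 + 1 / μ) * ‖hΞ.inv.posSemidef.sqrt‖ ^ 2 * δ ^ 2 := by
    have := mul_le_mul_of_nonneg_left hqb hμ'.le
    calc dv ⬝ᵥ Ξ⁻¹ *ᵥ dv
        ≤ γ * (e ⬝ᵥ Ξ⁻¹ *ᵥ e) + (1 + 1 / μ) * (qv ⬝ᵥ Ξ⁻¹ *ᵥ qv) := main
      _ ≤ γ * (e ⬝ᵥ Ξ⁻¹ *ᵥ e) + (1 + 1 / μ) * ‖hΞ.inv.posSemidef.sqrt‖ ^ 2 * δ ^ 2 := by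
          rw [mul_assoc]
          linarith
  rw [hS, hS]
  exact final
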